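/- Let c ∈ ℝ^d and write g_ℓ = g(‖(c − I_ℓ)/h‖²) and S = Σ_{ℓ=1}^n w_ℓ g_ℓ. If S ≠ 0, then ∇f(c) = 0 if and only if c is a fixed point of the mean shift iteration, i.e. c = (Σ_{ℓ=1}^n w_ℓ g_ℓ I_ℓ) / S. -/

import Mathlib

open InnerProductSpace

/-- A point `c` with nonzero total weight `S = Σ_ℓ w_ℓ g_ℓ` is a stationary
point of the weighted kernel score `f` iff it is a fixed point of the mean
shift iteration `c ↦ (Σ_ℓ w_ℓ g_ℓ I_ℓ) / S`. -/
theorem gradient_zero_iff_meanshift_fixed_point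
    (d n : ℕ) (I : Fin n → EuclideanSpace ℝ (Fin d)) (w : Fin n → ℝ)
    (h : ℝ) (hh : 0 < h) (k : ℝ → ℝ) (hk : Differentiable ℝ k)
    (g : ℝ → ℝ) (hg : g = fun t => -deriv k t)
    (f : EuclideanSpace ℝ (Fin d) → ℝ)
    (hf : f = fun c => ∑ ℓ : Fin n, w ℓ * k (‖h⁻¹ • (c - I ℓ)‖ ^ 2))
    (c : EuclideanSpace ℝ (Fin d))
    (gl : Fin n → ℝ) (hgl : gl = fun ℓ => g (‖h⁻¹ • (c - I ℓ)‖ ^ 2))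
    (S : ℝ) (hS : S = ∑ ℓ : Fin n, w ℓ * gl ℓ) (hS0 : S ≠ 0) :
    gradient f c = 0
      ↔ c = S⁻¹ • ∑ ℓ : Fin n, (w ℓ * gl ℓ) • I ℓ := by
  set t : Fin n → ℝ := fun ℓ => ‖h⁻¹ • (c - I ℓ)‖ ^ 2 with ht
  set G := ∑ ℓ : Fin n, (w ℓ * deriv k (t ℓ) * (2 * h⁻¹ * h⁻¹)) • (c - I ℓ) with hG
  have hgrad : HasGradientAt f G c := by
    rw [hasGradientAt_iff_hasFDerivAt]
    have hterm : ∀ ℓ : Fin n, HasFDerivAt (fun x => w ℓ * k (‖h⁻¹ • (x - I ℓ)‖ ^ 2))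
        ((w ℓ * deriv k (t ℓ) * (2 * h⁻¹ * h⁻¹)) • innerSL ℝ (c - I ℓ)) c := by
      intro ℓ
      have hu : HasFDerivAt (fun x => h⁻¹ • (x - I ℓ))
          (h⁻¹ • ContinuousLinearMap.id ℝ (EuclideanSpace ℝ (Fin d))) c :=
        ((hasFDerivAt_id c).sub_const (I ℓ)).const_smul h⁻¹
      have h1 := hu.norm_sq
      have h2 := ((hk (t ℓ)).hasDerivAt.comp_hasFDerivAt c h1).const_mul (w ℓ)
      refine h2.congr_fderiv ?_
      ext y
      simp [ContinuousLinearMap.smul_apply, real_inner_smul_left, inner_smul_left,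
        inner_smul_right, two_smul]
      ring
    have hsum := HasFDerivAt.fun_sum (fun ℓ (_ : ℓ ∈ Finset.univ) => hterm ℓ)
    rw [hf]
    refine HasFDerivAt.congr_fderiv hsum ?_
    symm
    ext y
    simp [toDual_apply_apply, hG, inner_sum, real_inner_smul_left]
  have hgc : gradient f c = G := hgrad.gradient
  rw [hgc]
  -- rewrite G
  have hwd : ∀ ℓ, w ℓ * deriv k (t ℓ) = -(w ℓ * gl ℓ) := by
    intro ℓ; rw [hgl, hg]; simp [ht]
  have hGeq : G = (-(2 * h⁻¹ * h⁻¹)) • (S • c - ∑ ℓ : Fin n, (w ℓ * gl ℓ) • I ℓ) := by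
    rw [hG, hS, Finset.sum_smul, ← Finset.sum_sub_distrib, Finset.smul_sum]
    refine Finset.sum_congr rfl fun ℓ _ => ?_
    rw [hwd ℓ]
    module
  have hne : (-(2 * h⁻¹ * h⁻¹)) ≠ 0 := by
    have h2 : (0:ℝ) < 2 * h⁻¹ * h⁻¹ := by positivity
    exact neg_ne_zero.mpr h2.ne'
  rw [hGeq, smul_eq_zero]
  constructor
  · rintro (hc | hc)
    · exact absurd hc hne
    · have hSc : S • c = ∑ ℓ : Fin n, (w ℓ * gl ℓ) • I ℓ := sub_eq_zero.mp hc
      rw [← hSc, smul_smul, inv_mul_cancel₀ hS0, one_smul]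
  · intro hc
    right
    rw [hc, smul_smul, mul_inv_cancel₀ hS0, one_smul, sub_self]
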